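/- arXiv:2404.07599 — 2 statements merged into one kernel-verified Lean document; each statement's English description precedes it below -/
import Mathlib

section
/- For every nontrivial real Banach space X (pointed at its origin), the set (PNA(X) \ LDirA(X)) ∪ {0} contains an isometric copy of ℓ∞: there exists a linear map T : ℓ∞ → Lip₀(X) such that ‖T a‖ = ‖a‖_∞ for every a ∈ ℓ∞, and for every nonzero a ∈ ℓ∞, the function T a attains its pointwise norm but does not attain its norm locally directionally. -/
open Filter Set
open scoped ZeroAtInfty ENNReal NNReal

/-- The optimal Lipschitz constant (Lipschitz norm) of `f : M → ℝ`. -/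
noncomputable def lipNorm {M : Type*} [MetricSpace M] (f : M → ℝ) : ℝ :=
  sSup {r : ℝ | ∃ p q : M, p ≠ q ∧ r = |f p - f q| / dist p q}

/-- `f` belongs to `Lip₀(M)`: it is Lipschitz and vanishes at the base point. -/
def MemLip0 {M : Type*} [MetricSpace M] (base : M) (f : M → ℝ) : Prop :=
  f base = 0 ∧ ∃ K : ℝ≥0, LipschitzWith K f

/-- `f` strongly attains its (Lipschitz) norm. -/
def StronglyAttains {M : Type*} [MetricSpace M] (f : M → ℝ) : Prop :=
  ∃ p q : M, p ≠ q ∧ |f p - f q| = lipNorm f * dist p q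

/-- `f` attains its pointwise norm. -/
def PointwiseAttains {M : Type*} [MetricSpace M] (f : M → ℝ) : Prop :=
  ∃ p : M, sSup {r : ℝ | ∃ q : M, q ≠ p ∧ r = |f p - f q| / dist p q} = lipNorm f

/-- `f` attains its norm through a derivative: for some `x` and unit direction `e`, the
two-sided directional derivative exists and has modulus `‖f‖`. -/
def DerAttains {X : Type*} [NormedAddCommGroup X] [NormedSpace ℝ X] (f : X → ℝ) : Prop :=
  ∃ x e : X, ‖e‖ = 1 ∧ ∃ L : ℝ,
    Filter.Tendsto (fun t : ℝ => (f (x + t • e) - f x) / t)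
      (nhdsWithin (0 : ℝ) {(0 : ℝ)}ᶜ) (nhds L) ∧
    |L| = lipNorm f

/-- `f` attains its norm locally directionally at a point `x̄` in the direction `u`
toward `z`. -/
def LocDirAttains {X : Type*} [NormedAddCommGroup X] [NormedSpace ℝ X] (f : X → ℝ) : Prop :=
  ∃ (xbar u : X) (z : ℝ), ‖u‖ = 1 ∧ |z| = lipNorm f ∧
    ∃ p q : ℕ → X, (∀ n, p n ≠ q n) ∧
      Filter.Tendsto (fun n => (f (q n) - f (p n)) / ‖q n - p n‖) Filter.atTop (nhds z) ∧
      Filter.Tendsto (fun n => ‖p n - q n‖⁻¹ • (p n - q n)) Filter.atTop (nhds u) ∧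
      Filter.Tendsto p Filter.atTop (nhds xbar) ∧
      Filter.Tendsto q Filter.atTop (nhds xbar)


namespace LinftyPNAHelper

noncomputable def bb (j : ℕ) : ℝ := 2 ^ ((j+1)^2)
noncomputable def BB (j : ℕ) : ℝ := 2 ^ ((j+1)^2 + (j+1))
noncomputable def mm (j : ℕ) : ℝ := (bb j + BB j) / 2
noncomputable def ll (j : ℕ) : ℝ := (BB j - bb j) / 2
noncomputable def cc (j : ℕ) : ℝ := (j+1) / (j+2)
noncomputable def g (j : ℕ) (t : ℝ) : ℝ := cc j * max 0 (ll j - |t - mm j|)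
def idx (j : ℕ) : ℕ := (Nat.unpair j).1
noncomputable def phi (a : ℕ → ℝ) (t : ℝ) : ℝ := ∑' j, a (idx j) * g j t

lemma bb_pos (j : ℕ) : 0 < bb j := by unfold bb; positivity

lemma bb_lt_BB (j : ℕ) : bb j < BB j :=
  pow_lt_pow_right₀ one_lt_two (by omega)

lemma BB_pos (j : ℕ) : 0 < BB j := (bb_pos j).trans (bb_lt_BB j)

lemma ll_pos (j : ℕ) : 0 < ll j := by
  have := bb_lt_BB j; unfold ll; linarith

lemma mm_pos (j : ℕ) : 0 < mm j := by
  have := bb_pos j; have := BB_pos j; unfold mm; linarith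

lemma gap {i j : ℕ} (h : i < j) : 2 * BB i ≤ bb j := by
  have h1 : (2:ℝ) * BB i = 2 ^ ((i+1)^2 + (i+1) + 1) := by
    rw [BB, pow_succ]; ring
  rw [h1, bb]
  exact pow_le_pow_right₀ one_le_two (by nlinarith)

lemma cc_pos (j : ℕ) : 0 < cc j := by unfold cc; positivity

lemma cc_lt_one (j : ℕ) : cc j < 1 := by
  rw [cc, div_lt_one (by positivity)]; linarith

lemma cc_le_one (j : ℕ) : cc j ≤ 1 := (cc_lt_one j).le

lemma g_nonneg (j : ℕ) (t : ℝ) : 0 ≤ g j t :=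
  mul_nonneg (cc_pos j).le (le_max_left _ _)

lemma g_lip (j : ℕ) (s t : ℝ) : |g j s - g j t| ≤ cc j * |s - t| := by
  unfold g
  rw [← mul_sub, abs_mul, abs_of_pos (cc_pos j)]
  refine mul_le_mul_of_nonneg_left ?_ (cc_pos j).le
  rw [max_comm 0 (ll j - |s - mm j|), max_comm 0 (ll j - |t - mm j|)]
  calc |(ll j - |s - mm j|) ⊔ 0 - (ll j - |t - mm j|) ⊔ 0|
      ≤ |(ll j - |s - mm j|) - (ll j - |t - mm j|)| := abs_max_sub_max_le_abs _ _ _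
    _ ≤ |s - t| := by
        have h := abs_abs_sub_abs_le_abs_sub (t - mm j) (s - mm j)
        have e1 : (ll j - |s - mm j|) - (ll j - |t - mm j|) = |t - mm j| - |s - mm j| := by
          ring
        have e2 : (t - mm j) - (s - mm j) = -(s - t) := by ring
        rw [e1]
        rw [e2, abs_neg] at h
        exact h

lemma support {j : ℕ} {t : ℝ} (h : g j t ≠ 0) : bb j < t ∧ t < BB j := by
  have h1 : ll j - |t - mm j| > 0 := by
    by_contra hc
    push_neg at hc
    apply h
    rw [g, max_eq_left hc, mul_zero]
  have h2 : |t - mm j| < ll j := by linarith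
  rw [abs_lt] at h2
  have hb : mm j - ll j = bb j := by unfold mm ll; ring
  have hB : mm j + ll j = BB j := by unfold mm ll; ring
  constructor <;> linarith

lemma g_le_right (j : ℕ) (t : ℝ) : g j t ≤ max 0 (BB j - t) := by
  have h1 : g j t ≤ max 0 (ll j - |t - mm j|) := by
    rw [g]
    nlinarith [cc_lt_one j, cc_pos j, le_max_left (0:ℝ) (ll j - |t - mm j|)]
  refine h1.trans (max_le_max le_rfl ?_)
  have : t - mm j ≤ |t - mm j| := le_abs_self _
  have hB : mm j + ll j = BB j := by unfold mm ll; ring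
  linarith

lemma g_le_left (j : ℕ) (t : ℝ) : g j t ≤ max 0 (t - bb j) := by
  have h1 : g j t ≤ max 0 (ll j - |t - mm j|) := by
    rw [g]
    nlinarith [cc_lt_one j, cc_pos j, le_max_left (0:ℝ) (ll j - |t - mm j|)]
  refine h1.trans (max_le_max le_rfl ?_)
  have : mm j - t ≤ |t - mm j| := by rw [abs_sub_comm]; exact le_abs_self _
  have hb : mm j - ll j = bb j := by unfold mm ll; ring
  linarith

lemma sep {i j : ℕ} {x y : ℝ} (hij : i ≠ j) (hx : g i x ≠ 0) (hy : g j y ≠ 0) :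
    2 < |x - y| := by
  have hbig : ∀ m : ℕ, (4:ℝ) ≤ BB m := by
    intro m
    have : (4:ℝ) = 2 ^ 2 := by norm_num
    rw [this, BB]
    exact pow_le_pow_right₀ one_le_two (by nlinarith)
  rcases hij.lt_or_gt with h | h
  · have h1 := (support hx).2
    have h2 := (support hy).1
    have h3 := gap h
    have h4 := BB_pos i
    have : 2 < y - x := by nlinarith [hbig i]
    rw [abs_sub_comm]
    calc (2:ℝ) < y - x := this
      _ ≤ |y - x| := le_abs_self _
  · have h1 := (support hy).2
    have h2 := (support hx).1
    have h3 := gap h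
    have h4 := BB_pos j
    have : 2 < x - y := by nlinarith [hbig j]
    calc (2:ℝ) < x - y := this
      _ ≤ |x - y| := le_abs_self _

lemma uniq {i j : ℕ} {t : ℝ} (hi : g i t ≠ 0) (hj : g j t ≠ 0) : i = j := by
  by_contra h
  have := sep h hi hj
  simp at this
  linarith

lemma summable_g (a : ℕ → ℝ) (t : ℝ) : Summable fun m => a (idx m) * g m t := by
  by_cases h : ∀ m, g m t = 0
  · exact (summable_congr fun m => by rw [h m, mul_zero]).mpr summable_zero
  · push_neg at h
    obtain ⟨j, hj⟩ := h
    refine summable_of_ne_finset_zero (s := {j}) fun m hm => ?_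
    simp only [Finset.mem_singleton] at hm
    by_cases hg : g m t = 0
    · rw [hg, mul_zero]
    · exact absurd (uniq hg hj) hm

lemma phi_eq {a : ℕ → ℝ} {t : ℝ} {j : ℕ} (hj : ∀ m, m ≠ j → g m t = 0) :
    phi a t = a (idx j) * g j t :=
  tsum_eq_single j fun m hm => by rw [hj m hm, mul_zero]

lemma phi_eq' {a : ℕ → ℝ} {t : ℝ} {j : ℕ} (hj : g j t ≠ 0) :
    phi a t = a (idx j) * g j t :=
  phi_eq fun m hm => by
    by_contra hg
    exact hm (uniq hg hj)

lemma phi_eq_zero {a : ℕ → ℝ} {t : ℝ} (h : ∀ m, g m t = 0) : phi a t = 0 := by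
  rw [phi]
  convert tsum_zero with m
  rw [h m, mul_zero]

lemma phi_zero (a : ℕ → ℝ) : phi a 0 = 0 := by
  refine phi_eq_zero fun m => ?_
  by_contra h
  have := (support h).1
  have := bb_pos m
  linarith

lemma phi_add (a b : ℕ → ℝ) (t : ℝ) :
    phi (fun n => a n + b n) t = phi a t + phi b t := by
  unfold phi
  rw [← Summable.tsum_add (summable_g a t) (summable_g b t)]
  exact tsum_congr fun j => by ring

lemma phi_smul (c : ℝ) (a : ℕ → ℝ) (t : ℝ) :
    phi (fun n => c * a n) t = c * phi a t := by
  unfold phi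
  rw [← tsum_mul_left]
  exact tsum_congr fun j => by ring

lemma phi_lip {L : ℝ} (hL : 0 ≤ L) {a : ℕ → ℝ} (ha : ∀ n, |a n| ≤ L) (s t : ℝ) :
    |phi a s - phi a t| ≤ L * |s - t| := by
  have key : ∀ s t : ℝ, s ≤ t → |phi a s - phi a t| ≤ L * |s - t| := by
    intro s t hst
    rcases eq_or_lt_of_le hst with rfl | hlt
    · simp
    by_cases hs : ∀ m, g m s = 0 <;> by_cases ht : ∀ m, g m t = 0
    · rw [phi_eq_zero hs, phi_eq_zero ht]; simp; positivity
    · push_neg at ht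
      obtain ⟨j, hj⟩ := ht
      rw [phi_eq_zero hs, phi_eq' hj]
      have h1 : g j s = 0 := hs j
      have h2 : |g j s - g j t| ≤ cc j * |s - t| := g_lip j s t
      rw [h1, zero_sub, abs_neg, abs_mul, abs_of_nonneg (g_nonneg j t)] at *
      calc |a (idx j)| * g j t ≤ L * (cc j * |s - t|) := by
            refine mul_le_mul (ha _) (by simpa using h2) (g_nonneg j t) hL
        _ ≤ L * |s - t| := by
            nlinarith [cc_le_one j, abs_nonneg (s - t), mul_nonneg hL (abs_nonneg (s - t)),
              mul_nonneg (mul_nonneg hL (sub_nonneg.mpr (cc_le_one j))) (abs_nonneg (s - t))]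
    · push_neg at hs
      obtain ⟨j, hj⟩ := hs
      rw [phi_eq' hj, phi_eq_zero ht]
      have h1 : g j t = 0 := ht j
      have h2 : |g j s - g j t| ≤ cc j * |s - t| := g_lip j s t
      rw [h1, sub_zero, abs_mul, abs_of_nonneg (g_nonneg j s)] at *
      calc |a (idx j)| * g j s ≤ L * (cc j * |s - t|) := by
            refine mul_le_mul (ha _) (by simpa using h2) (g_nonneg j s) hL
        _ ≤ L * |s - t| := by
            nlinarith [cc_le_one j, abs_nonneg (s - t), mul_nonneg hL (abs_nonneg (s - t)),
              mul_nonneg (mul_nonneg hL (sub_nonneg.mpr (cc_le_one j))) (abs_nonneg (s - t))]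
    · push_neg at hs ht
      obtain ⟨i, hi⟩ := hs
      obtain ⟨j, hj⟩ := ht
      rw [phi_eq' hi, phi_eq' hj]
      by_cases hij : i = j
      · subst hij
        rw [← mul_sub, abs_mul]
        calc |a (idx i)| * |g i s - g i t| ≤ L * (cc i * |s - t|) :=
              mul_le_mul (ha _) (g_lip i s t) (abs_nonneg _) hL
          _ ≤ L * |s - t| := by
              nlinarith [cc_le_one i, abs_nonneg (s - t), mul_nonneg hL (abs_nonneg (s - t)),
                mul_nonneg (mul_nonneg hL (sub_nonneg.mpr (cc_le_one i))) (abs_nonneg (s - t))]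
      · -- cross case: i < j forced
        have hilt : i < j := by
          rcases Nat.lt_or_ge i j with h | h
          · exact h
          · exfalso
            have h' : j < i := lt_of_le_of_ne h (Ne.symm hij)
            have h1 := (support hj).2
            have h2 := (support hi).1
            have h3 := gap h'
            have h4 := BB_pos j
            linarith
        have h1 : g i s ≤ BB i - s := by
          have := g_le_right i s
          have h5 := (support hi).2
          rw [max_eq_right (by linarith)] at this
          exact this
        have h2 : g j t ≤ t - bb j := by
          have := g_le_left j t
          have h5 := (support hj).1
          rw [max_eq_right (by linarith)] at this
          exact this
        have h3 := gap hilt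
        have h4 := BB_pos i
        have habs : |s - t| = t - s := by rw [abs_sub_comm]; exact abs_of_pos (by linarith)
        rw [habs]
        calc |a (idx i) * g i s - a (idx j) * g j t|
            ≤ |a (idx i) * g i s| + |a (idx j) * g j t| := abs_sub _ _
          _ = |a (idx i)| * g i s + |a (idx j)| * g j t := by
              rw [abs_mul, abs_mul, abs_of_nonneg (g_nonneg i s), abs_of_nonneg (g_nonneg j t)]
          _ ≤ L * g i s + L * g j t := by
              have := g_nonneg i s; have := g_nonneg j t
              have := ha (idx i); have := ha (idx j)
              have h0 : (0:ℝ) ≤ |a (idx i)| := abs_nonneg _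
              have h0' : (0:ℝ) ≤ |a (idx j)| := abs_nonneg _
              nlinarith
          _ ≤ L * ((BB i - s) + (t - bb j)) := by nlinarith
          _ ≤ L * (t - s) := by nlinarith
  rcases le_total s t with h | h
  · exact key s t h
  · rw [abs_sub_comm (phi a s), abs_sub_comm s]
    exact key t s h

lemma phi_local {L : ℝ} (hL : 0 ≤ L) {a : ℕ → ℝ} (ha : ∀ n, |a n| ≤ L) (sb : ℝ) :
    ∃ j : ℕ, ∀ s t : ℝ, |s - sb| ≤ 1 → |t - sb| ≤ 1 →
      |phi a s - phi a t| ≤ (cc j * L) * |s - t| := by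
  by_cases H : ∃ j u, |u - sb| ≤ 1 ∧ g j u ≠ 0
  · obtain ⟨j, u, hu, hgu⟩ := H
    refine ⟨j, fun s t hs ht => ?_⟩
    have hiball : ∀ v : ℝ, |v - sb| ≤ 1 → phi a v = a (idx j) * g j v := by
      intro v hv
      refine phi_eq fun m hm => ?_
      by_contra hg
      have := sep hm hg hgu
      have : |v - u| ≤ 2 := by
        calc |v - u| = |(v - sb) + (sb - u)| := by ring_nf
          _ ≤ |v - sb| + |sb - u| := abs_add_le _ _
          _ ≤ 1 + 1 := by
              rw [abs_sub_comm sb u]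
              exact add_le_add hv hu
          _ = 2 := by norm_num
      linarith
    rw [hiball s hs, hiball t ht, ← mul_sub, abs_mul]
    calc |a (idx j)| * |g j s - g j t| ≤ L * (cc j * |s - t|) :=
          mul_le_mul (ha _) (g_lip j s t) (abs_nonneg _) hL
      _ = (cc j * L) * |s - t| := by ring
  · push_neg at H
    refine ⟨0, fun s t hs ht => ?_⟩
    rw [phi_eq_zero (fun m => H m s hs), phi_eq_zero (fun m => H m t ht)]
    simp only [sub_self, abs_zero]
    exact mul_nonneg (mul_nonneg (cc_pos 0).le hL) (abs_nonneg _)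

lemma g_mm (j : ℕ) : g j (mm j) = cc j * ll j := by
  rw [g, sub_self, abs_zero, sub_zero, max_eq_right (ll_pos j).le]

lemma g_mm_ne (j : ℕ) : g j (mm j) ≠ 0 := by
  rw [g_mm]
  exact ne_of_gt (mul_pos (cc_pos j) (ll_pos j))

lemma theta_lb (j : ℕ) : 1 - 3 / (j + 2) ≤ cc j * ll j / mm j := by
  have hmm := mm_pos j
  have hj2 : (0:ℝ) < (j:ℝ) + 2 := by positivity
  have hbp := bb_pos j
  have hBB : BB j = bb j * 2 ^ (j+1) := by rw [bb, BB, pow_add]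
  have hp : ((j:ℝ) + 2) ≤ 2 ^ (j+1) := by
    have h : (j + 2 : ℕ) ≤ 2 ^ (j+1) := Nat.lt_two_pow_self (n := j+1)
    calc ((j:ℝ)+2) = ((j+2 : ℕ) : ℝ) := by push_cast; ring
      _ ≤ ((2^(j+1) : ℕ) : ℝ) := by exact_mod_cast h
      _ = 2 ^ (j+1) := by push_cast; ring
  rw [le_div_iff₀ hmm, cc, div_mul_eq_mul_div, le_div_iff₀ hj2]
  have key : (1 - 3/((j:ℝ)+2)) * mm j * ((j:ℝ)+2) = ((j:ℝ) - 1) * mm j := by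
    have h : (1 - 3/((j:ℝ)+2)) * ((j:ℝ)+2) = (j:ℝ) - 1 := by
      field_simp
      ring
    linear_combination mm j * h
  rw [key, mm, ll, hBB]
  nlinarith [mul_pos hbp (show (0:ℝ) < 2^(j+1) - (j:ℝ) from by linarith)]

lemma exists_theta {δ : ℝ} (hδ : 0 < δ) (n : ℕ) :
    ∃ j : ℕ, idx j = n ∧ 1 - δ ≤ cc j * ll j / mm j := by
  obtain ⟨M, hM⟩ := exists_nat_gt (3 / δ)
  refine ⟨Nat.pair n M, by simp [idx], ?_⟩
  have h1 := theta_lb (Nat.pair n M)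
  have hMle : (M:ℝ) ≤ (Nat.pair n M : ℕ) := by exact_mod_cast Nat.right_le_pair n M
  have h2 : 3 / ((Nat.pair n M : ℝ) + 2) ≤ 3 / ((M:ℝ) + 2) := by
    apply div_le_div_of_nonneg_left (by norm_num) (by positivity) (by linarith)
  have h3 : 3 / ((M:ℝ) + 2) < δ := by
    rw [div_lt_iff₀ (by positivity)]
    rw [div_lt_iff₀ hδ] at hM
    nlinarith
  linarith

lemma sSup_eq {S : Set ℝ} {L : ℝ} (h1 : ∀ r ∈ S, r ≤ L)
    (h2 : ∀ ε : ℝ, 0 < ε → ∃ r ∈ S, L - ε ≤ r) : sSup S = L := by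
  have hne : S.Nonempty := by
    obtain ⟨r, hr, _⟩ := h2 1 one_pos
    exact ⟨r, hr⟩
  refine le_antisymm (csSup_le hne h1) ?_
  refine le_of_forall_pos_le_add fun ε hε => ?_
  obtain ⟨r, hr, hr2⟩ := h2 ε hε
  have := le_csSup ⟨L, h1⟩ hr
  linarith

end LinftyPNAHelper


open LinftyPNAHelper

/-- For every nontrivial real Banach space `X`, the set `(PNA(X) \ LDirA(X)) ∪ {0}`
contains an isometric copy of `ℓ∞`. -/
theorem linfty_in_PNA_not_LDirA {X : Type*} [NormedAddCommGroup X] [NormedSpace ℝ X]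
    [CompleteSpace X] [Nontrivial X] :
    ∃ T : lp (fun _ : ℕ => ℝ) ⊤ →ₗ[ℝ] (X → ℝ),
      ∀ a : lp (fun _ : ℕ => ℝ) ⊤,
        MemLip0 (0 : X) (T a) ∧ lipNorm (T a) = ‖a‖ ∧
        (a ≠ 0 → PointwiseAttains (T a) ∧ ¬ LocDirAttains (T a)) := by
  classical
  obtain ⟨x0, hx0⟩ := exists_ne (0 : X)
  set e : X := ‖x0‖⁻¹ • x0 with he
  have hne : ‖e‖ = 1 := by
    rw [he, norm_smul, norm_inv, norm_norm, inv_mul_cancel₀ (norm_ne_zero_iff.mpr hx0)]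
  have he0 : e ≠ 0 := by
    intro h
    rw [h, norm_zero] at hne
    norm_num at hne
  refine ⟨{ toFun := fun a => fun x => phi (fun n => a n) ‖x‖,
            map_add' := fun a b => ?_, map_smul' := fun c a => ?_ }, ?_⟩
  · funext x
    have hc : (fun n => (↑(a + b) : ∀ _ : ℕ, ℝ) n)
        = fun n => (a : ∀ _ : ℕ, ℝ) n + (b : ∀ _ : ℕ, ℝ) n := by
      funext n
      simp [lp.coeFn_add]
    show phi (fun n => (↑(a + b) : ∀ _ : ℕ, ℝ) n) ‖x‖
        = phi (fun n => (a : ∀ _ : ℕ, ℝ) n) ‖x‖ + phi (fun n => (b : ∀ _ : ℕ, ℝ) n) ‖x‖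
    rw [hc, phi_add]
  · funext x
    have hc : (fun n => (↑(c • a) : ∀ _ : ℕ, ℝ) n) = fun n => c * (a : ∀ _ : ℕ, ℝ) n := by
      funext n
      simp [lp.coeFn_smul]
    show phi (fun n => (↑(c • a) : ∀ _ : ℕ, ℝ) n) ‖x‖ = c * phi (fun n => (a : ∀ _ : ℕ, ℝ) n) ‖x‖
    rw [hc, phi_smul]
  intro a
  simp only [LinearMap.coe_mk, AddHom.coe_mk]
  set A : ℕ → ℝ := fun n => (a : ∀ _ : ℕ, ℝ) n with hA
  set f : X → ℝ := fun x => phi A ‖x‖ with hf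
  have hbound : ∀ n, |A n| ≤ ‖a‖ := fun n => by
    simpa only [hA, Real.norm_eq_abs] using lp.norm_apply_le_norm ENNReal.top_ne_zero a n
  have hanorm : (0:ℝ) ≤ ‖a‖ := norm_nonneg a
  have hLip : ∀ p q : X, |f p - f q| ≤ ‖a‖ * dist p q := by
    intro p q
    calc |f p - f q| ≤ ‖a‖ * |‖p‖ - ‖q‖| := phi_lip hanorm hbound _ _
      _ ≤ ‖a‖ * dist p q := by
          rw [dist_eq_norm]
          exact mul_le_mul_of_nonneg_left (abs_norm_sub_norm_le p q) hanorm
  have hf0 : f 0 = 0 := by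
    show phi A ‖(0:X)‖ = 0
    rw [norm_zero]
    exact phi_zero A
  have hW : ∀ ε : ℝ, 0 < ε → ∃ q : X, q ≠ 0 ∧ ‖a‖ - ε ≤ |f 0 - f q| / dist 0 q := by
    intro ε hε
    rcases le_or_gt ‖a‖ ε with hcase | hcase
    · refine ⟨e, he0, ?_⟩
      have h0 : (0:ℝ) ≤ |f 0 - f e| / dist 0 e := by positivity
      linarith
    · have hapos : (0:ℝ) < ‖a‖ := lt_trans hε hcase
      have h1 : ‖a‖ - ε/2 < ⨆ n : ℕ, ‖(a : ∀ _ : ℕ, ℝ) n‖ := by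
        rw [← lp.norm_eq_ciSup]
        linarith
      obtain ⟨n, hn⟩ := exists_lt_of_lt_ciSup h1
      have hn' : ‖a‖ - ε/2 < |A n| := by
        simpa only [hA, Real.norm_eq_abs] using hn
      set δ : ℝ := ε / (2 * (‖a‖ + 1)) with hδdef
      have hδ : 0 < δ := by positivity
      obtain ⟨j, hjn, hθ⟩ := exists_theta hδ n
      set q : X := mm j • e with hqdef
      have hqnorm : ‖q‖ = mm j := by
        rw [hqdef, norm_smul, hne, mul_one, Real.norm_eq_abs, abs_of_pos (mm_pos j)]
      have hq0 : q ≠ 0 := by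
        rw [hqdef]
        exact smul_ne_zero (ne_of_gt (mm_pos j)) he0
      have hfq : f q = A n * (cc j * ll j) := by
        show phi A ‖q‖ = _
        rw [hqnorm, phi_eq' (g_mm_ne j), g_mm, hjn]
      refine ⟨q, hq0, ?_⟩
      rw [hf0, hfq, dist_zero_left, hqnorm, zero_sub, abs_neg, abs_mul,
        abs_of_pos (mul_pos (cc_pos j) (ll_pos j))]
      have hval : |A n| * (cc j * ll j) / mm j = |A n| * (cc j * ll j / mm j) := by
        ring
      rw [hval]
      have hAn0 : (0:ℝ) < |A n| := by linarith
      have hAle : |A n| ≤ ‖a‖ := hbound n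
      have hδ1 : δ * (‖a‖ + 1) = ε / 2 := by
        have hx : ‖a‖ + 1 ≠ 0 := by positivity
        rw [hδdef, div_mul_eq_mul_div, mul_comm 2 (‖a‖ + 1), mul_comm ε (‖a‖ + 1),
          mul_div_mul_left _ _ hx]
      have key1 : |A n| * (1 - δ) ≤ |A n| * (cc j * ll j / mm j) :=
        mul_le_mul_of_nonneg_left hθ hAn0.le
      have key2 : |A n| * δ ≤ ‖a‖ * δ := mul_le_mul_of_nonneg_right hAle hδ.le
      nlinarith
  have hlipnorm : lipNorm f = ‖a‖ := by
    apply sSup_eq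
    · rintro r ⟨p, q, hpq, rfl⟩
      rw [div_le_iff₀ (dist_pos.mpr hpq)]
      exact hLip p q
    · intro ε hε
      obtain ⟨q, hq0, hq⟩ := hW ε hε
      exact ⟨_, ⟨0, q, Ne.symm hq0, rfl⟩, hq⟩
  refine ⟨⟨hf0, ⟨‖a‖₊, ?_⟩⟩, hlipnorm, ?_⟩
  · apply LipschitzWith.of_dist_le_mul
    intro p q
    rw [Real.dist_eq, coe_nnnorm]
    exact hLip p q
  intro ha0
  have hapos : (0:ℝ) < ‖a‖ := norm_pos_iff.mpr ha0
  constructor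
  · refine ⟨0, ?_⟩
    rw [hlipnorm]
    apply sSup_eq
    · rintro r ⟨q, hq0, rfl⟩
      rw [div_le_iff₀ (dist_pos.mpr (Ne.symm hq0))]
      exact hLip 0 q
    · intro ε hε
      obtain ⟨q, hq0, hq⟩ := hW ε hε
      exact ⟨_, ⟨q, hq0, rfl⟩, hq⟩
  · rintro ⟨xbar, u, z, hu, hz, p, q, hpq, hslope, hdir, hp, hq⟩
    rw [hlipnorm] at hz
    obtain ⟨j, hlocal⟩ := phi_local hanorm hbound ‖xbar‖
    have hC : cc j * ‖a‖ < ‖a‖ := by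
      nlinarith [cc_lt_one j]
    have hzleC : |z| ≤ cc j * ‖a‖ := by
      apply le_of_tendsto hslope.abs
      have hpn : ∀ᶠ n in atTop, |‖p n‖ - ‖xbar‖| ≤ 1 := by
        have h := hp.norm
        rw [Metric.tendsto_atTop] at h
        obtain ⟨N, hN⟩ := h 1 one_pos
        refine eventually_atTop.mpr ⟨N, fun n hn => ?_⟩
        have := hN n hn
        rw [Real.dist_eq] at this
        linarith
      have hqn : ∀ᶠ n in atTop, |‖q n‖ - ‖xbar‖| ≤ 1 := by
        have h := hq.norm
        rw [Metric.tendsto_atTop] at h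
        obtain ⟨N, hN⟩ := h 1 one_pos
        refine eventually_atTop.mpr ⟨N, fun n hn => ?_⟩
        have := hN n hn
        rw [Real.dist_eq] at this
        linarith
      filter_upwards [hpn, hqn] with n h1 h2
      have hne' : q n - p n ≠ 0 := sub_ne_zero.mpr (Ne.symm (hpq n))
      have hpos : (0:ℝ) < ‖q n - p n‖ := norm_pos_iff.mpr hne'
      have hbd : |f (q n) - f (p n)| ≤ (cc j * ‖a‖) * ‖q n - p n‖ := by
        calc |f (q n) - f (p n)| ≤ (cc j * ‖a‖) * |‖q n‖ - ‖p n‖| := hlocal _ _ h2 h1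
          _ ≤ (cc j * ‖a‖) * ‖q n - p n‖ :=
              mul_le_mul_of_nonneg_left (abs_norm_sub_norm_le _ _)
                (mul_nonneg (cc_pos j).le hanorm)
      rw [abs_div, abs_norm, div_le_iff₀ hpos]
      exact hbd
    linarith
end

section
/- For every nontrivial real Banach space X (pointed at its origin), the set [(PNA(X) ∩ LDirA(X)) \ Der(X)] ∪ {0} contains an isometric copy of ℓ∞: there exists a linear map T : ℓ∞ → Lip₀(X) such that ‖T a‖ = ‖a‖_∞ for every a ∈ ℓ∞, and for every nonzero a ∈ ℓ∞, the function T a attains both its pointwise norm and its norm locally directionally, but does not attain its norm through a derivative. -/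
open Filter Set
open scoped ZeroAtInfty ENNReal NNReal

noncomputable section
namespace LinfAux

/-- quadratic bump profile: equals `τ - τ^2` on `[0,1]`, `0` outside. -/
def bfun (τ : ℝ) : ℝ := 1/4 - (min |τ - 1/2| (1/2))^2

lemma bfun_eq {τ : ℝ} (h0 : 0 ≤ τ) (h1 : τ ≤ 1) : bfun τ = τ - τ^2 := by
  have h : |τ - 1/2| ≤ 1/2 := by rw [abs_le]; constructor <;> linarith
  rw [bfun, min_eq_left h, sq_abs]; ring

lemma bfun_zero {τ : ℝ} (h : τ ≤ 0 ∨ 1 ≤ τ) : bfun τ = 0 := by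
  have h : (1:ℝ)/2 ≤ |τ - 1/2| := by
    rcases h with h | h
    · rw [abs_sub_comm, abs_of_nonneg (by linarith)]; linarith
    · rw [abs_of_nonneg (by linarith)]; linarith
  rw [bfun, min_eq_right h]; norm_num

lemma bfun_nonneg (τ : ℝ) : 0 ≤ bfun τ := by
  have h1 : 0 ≤ min |τ - 1/2| (1/2) := le_min (abs_nonneg _) (by norm_num)
  have h2 : min |τ - 1/2| (1/2) ≤ 1/2 := min_le_right _ _
  have := mul_le_mul h2 h2 h1 (by norm_num)
  rw [bfun]; nlinarith

lemma bfun_pos {τ : ℝ} (h0 : 0 < τ) (h1 : τ < 1) : 0 < bfun τ := by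
  rw [bfun_eq h0.le h1.le]; nlinarith

lemma bfun_lip (x y : ℝ) : |bfun x - bfun y| ≤ |x - y| := by
  set vx := min |x - 1/2| (1/2) with hvx
  set vy := min |y - 1/2| (1/2) with hvy
  have hx0 : 0 ≤ vx := le_min (abs_nonneg _) (by norm_num)
  have hy0 : 0 ≤ vy := le_min (abs_nonneg _) (by norm_num)
  have hx1 : vx ≤ 1/2 := min_le_right _ _
  have hy1 : vy ≤ 1/2 := min_le_right _ _
  have hd : |vx - vy| ≤ |x - y| := by
    have h1 : |vx - vy| ≤ max |(|x - 1/2|) - (|y - 1/2|)| |1/2 - 1/2| := by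
      rw [hvx, hvy]; exact abs_min_sub_min_le_max _ _ _ _
    have h2 : |(|x - 1/2|) - (|y - 1/2|)| ≤ |x - y| := by
      have := abs_abs_sub_abs_le_abs_sub (x - 1/2) (y - 1/2)
      simpa using this
    calc |vx - vy| ≤ _ := h1
      _ ≤ |x - y| := by simpa using h2
  have : bfun x - bfun y = (vy - vx) * (vy + vx) := by rw [bfun, bfun]; ring
  rw [this, abs_mul]
  have : |vy + vx| ≤ 1 := by rw [abs_of_nonneg (by linarith)]; linarith
  calc |vy - vx| * |vy + vx| ≤ |x - y| * 1 := by
        apply mul_le_mul _ this (abs_nonneg _) (abs_nonneg _)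
        rw [abs_sub_comm]; exact hd
    _ = |x - y| := by ring

/-- right endpoint of bump interval `m` -/
def rr (m : ℕ) : ℝ := (2:ℝ)⁻¹ ^ ((m+1)^2)
/-- left endpoint of bump interval `m` -/
def ll (m : ℕ) : ℝ := (2:ℝ)⁻¹ ^ ((m+1)^2 + 2*(m+1))
/-- width of bump interval `m` -/
def ww (m : ℕ) : ℝ := rr m - ll m

lemma half_pos' : (0:ℝ) < 2⁻¹ := by norm_num
lemma rr_pos (m : ℕ) : 0 < rr m := pow_pos half_pos' _
lemma ll_pos (m : ℕ) : 0 < ll m := pow_pos half_pos' _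

lemma pow_half_lt_pow_half {i j : ℕ} (h : i < j) : (2:ℝ)⁻¹ ^ j < (2:ℝ)⁻¹ ^ i :=
  pow_lt_pow_right_of_lt_one₀ (by norm_num) (by norm_num) h

lemma ll_lt_rr (m : ℕ) : ll m < rr m := pow_half_lt_pow_half (by omega)

lemma ww_pos (m : ℕ) : 0 < ww m := sub_pos.2 (ll_lt_rr m)

lemma rr_succ_lt_ll (m : ℕ) : rr (m+1) < ll m := by
  apply pow_half_lt_pow_half; nlinarith

lemma rr_antitone {m₁ m₂ : ℕ} (h : m₁ ≤ m₂) : rr m₂ ≤ rr m₁ := by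
  rcases eq_or_lt_of_le h with rfl | h
  · exact le_refl _
  · exact (pow_half_lt_pow_half (by nlinarith)).le

lemma rr_le_ll_of_lt {m₁ m₂ : ℕ} (h : m₁ < m₂) : rr m₂ ≤ ll m₁ :=
  le_trans (rr_antitone h) (rr_succ_lt_ll m₁).le

lemma rr_le_half (m : ℕ) : rr m ≤ 2⁻¹ ^ (m+1) := by
  apply pow_le_pow_of_le_one (by norm_num) (by norm_num); nlinarith

lemma rr_lt_inv (m : ℕ) : rr m < 1/(m+1 : ℝ) := by
  apply lt_of_le_of_lt (rr_le_half m)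
  rw [div_eq_inv_mul, mul_one]
  rw [inv_pow]
  apply inv_strictAnti₀ (by positivity)
  calc (m:ℝ)+1 ≤ 2^m := by exact_mod_cast (Nat.lt_two_pow_self (n := m))
    _ < 2^(m+1) := by exact_mod_cast Nat.pow_lt_pow_succ (by norm_num)

/-- the scaled bump on interval `m` -/
def bump (m : ℕ) (t : ℝ) : ℝ := ww m * bfun ((t - ll m) / ww m)

lemma bump_nonneg (m : ℕ) (t : ℝ) : 0 ≤ bump m t :=
  mul_nonneg (ww_pos m).le (bfun_nonneg _)

lemma bump_zero_left {m : ℕ} {t : ℝ} (h : t ≤ ll m) : bump m t = 0 := by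
  rw [bump, bfun_zero (Or.inl (div_nonpos_of_nonpos_of_nonneg (by linarith) (ww_pos m).le))]
  · ring

lemma bump_zero_right {m : ℕ} {t : ℝ} (h : rr m ≤ t) : bump m t = 0 := by
  rw [bump, bfun_zero (Or.inr _)]
  · ring
  · rw [le_div_iff₀ (ww_pos m), one_mul, ww]; linarith

lemma bump_support {m : ℕ} {t : ℝ} (h : bump m t ≠ 0) : ll m < t ∧ t < rr m := by
  constructor
  · by_contra hc; exact h (bump_zero_left (not_lt.1 hc))
  · by_contra hc; exact h (bump_zero_right (not_lt.1 hc))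

lemma bump_pos {m : ℕ} {t : ℝ} (h1 : ll m < t) (h2 : t < rr m) : 0 < bump m t := by
  apply mul_pos (ww_pos m)
  apply bfun_pos (div_pos (by linarith) (ww_pos m))
  rw [div_lt_iff₀ (ww_pos m), one_mul, ww]; linarith

lemma bump_lip (m : ℕ) (x y : ℝ) : |bump m x - bump m y| ≤ |x - y| := by
  rw [bump, bump, ← mul_sub, abs_mul, abs_of_pos (ww_pos m)]
  calc ww m * |bfun ((x - ll m)/ww m) - bfun ((y - ll m)/ww m)|
      ≤ ww m * |(x - ll m)/ww m - (y - ll m)/ww m| := by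
        exact mul_le_mul_of_nonneg_left (bfun_lip _ _) (ww_pos m).le
    _ = |x - y| := by
        rw [div_sub_div_same, abs_div, abs_of_pos (ww_pos m),
          mul_div_assoc', mul_comm, mul_div_assoc, div_self (ww_pos m).ne', mul_one,
          show x - ll m - (y - ll m) = x - y by ring]

lemma bump_unique {m m' : ℕ} {t : ℝ} (h : bump m t ≠ 0) (h' : bump m' t ≠ 0) : m = m' := by
  by_contra hne
  obtain ⟨h1, h2⟩ := bump_support h
  obtain ⟨h1', h2'⟩ := bump_support h'
  rcases Nat.lt_or_ge m m' with hlt | hge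
  · have := rr_le_ll_of_lt hlt; linarith
  · have hlt : m' < m := by omega
    have := rr_le_ll_of_lt hlt; linarith


open Classical in
/-- index of the bump containing `t` (junk if none). -/
def Mdx (t : ℝ) : ℕ := if h : ∃ m, bump m t ≠ 0 then h.choose else 0

/-- coordinate index used on bump `m` -/
def np (m : ℕ) : ℕ := (Nat.unpair m).1

/-- the main function on the real line -/
def Gfun (a : ℕ → ℝ) (t : ℝ) : ℝ := a (np (Mdx t)) * bump (Mdx t) t

lemma Mdx_eq {m : ℕ} {t : ℝ} (h : bump m t ≠ 0) : Mdx t = m := by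
  rw [Mdx, dif_pos ⟨m, h⟩]
  exact bump_unique (⟨m, h⟩ : ∃ m, bump m t ≠ 0).choose_spec h

lemma Gfun_eq_bump (a : ℕ → ℝ) {m : ℕ} {t : ℝ} (h1 : rr (m+1) ≤ t) (h2 : t ≤ rr m) :
    Gfun a t = a (np m) * bump m t := by
  by_cases hb : bump m t ≠ 0
  · rw [Gfun, Mdx_eq hb]
  · push_neg at hb
    rw [hb, mul_zero]
    have hall : ∀ m', bump m' t = 0 := by
      intro m'
      by_contra h'
      obtain ⟨hl, hr⟩ := bump_support h'
      rcases Nat.lt_trichotomy m' m with hlt | rfl | hgt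
    
      · have h3 : rr m ≤ rr (m'+1) := rr_antitone (by omega)
        have h4 := rr_succ_lt_ll m'
        linarith
      · exact h' hb
      · have h3 : rr m' ≤ rr (m+1) := rr_antitone (by omega)
        have h4 := rr_succ_lt_ll m
        linarith
    rw [Gfun, hall, mul_zero]

lemma Gfun_zero_out (a : ℕ → ℝ) {t : ℝ} (h : t ≤ 0 ∨ rr 0 ≤ t) : Gfun a t = 0 := by
  have hall : ∀ m', bump m' t = 0 := by
    intro m'
    rcases h with h | h
    · exact bump_zero_left (le_trans h (ll_pos m').le)
    · exact bump_zero_right (le_trans (rr_antitone (Nat.zero_le m')) h)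
  rw [Gfun, hall, mul_zero]

lemma exists_interval {t : ℝ} (h0 : 0 < t) (h1 : t ≤ rr 0) :
    ∃ m, rr (m+1) ≤ t ∧ t ≤ rr m := by
  classical
  have hex : ∃ m, rr (m+1) ≤ t := by
    obtain ⟨k, hk⟩ := exists_nat_one_div_lt h0
    refine ⟨k, le_trans (rr_lt_inv (k+1)).le (le_trans ?_ hk.le)⟩
    apply one_div_le_one_div_of_le (by positivity)
    push_cast; linarith
  set m := Nat.find hex with hm
  refine ⟨m, Nat.find_spec hex, ?_⟩
  rcases Nat.eq_zero_or_pos m with h | h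
  · rw [h]; exact h1
  · have h2 := Nat.find_min hex (m := m - 1) (by omega)
    push_neg at h2
    have hmm : m - 1 + 1 = m := by omega
    rw [hmm] at h2
    exact h2.le

lemma Gfun_zero_gap (a : ℕ → ℝ) {m : ℕ} {t : ℝ} (h1 : rr (m+1) ≤ t) (h2 : t ≤ ll m) :
    Gfun a t = 0 := by
  rw [Gfun_eq_bump a h1 (le_trans h2 (ll_lt_rr m).le), bump_zero_left h2, mul_zero]

/-- distance-to-endpoints bound inside interval `m` -/
lemma Gfun_bound_left (a : ℕ → ℝ) {C : ℝ} (hC : ∀ i, |a i| ≤ C) {m : ℕ} {t : ℝ}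
    (h1 : rr (m+1) ≤ t) (h2 : t ≤ rr m) : |Gfun a t| ≤ C * (t - rr (m+1)) := by
  have hb : bump m (rr (m+1)) = 0 := bump_zero_left (rr_succ_lt_ll m).le
  rw [Gfun_eq_bump a h1 h2, abs_mul]
  calc |a (np m)| * |bump m t| ≤ C * |bump m t - bump m (rr (m+1))| := by
        rw [hb, sub_zero]; exact mul_le_mul_of_nonneg_right (hC _) (abs_nonneg _)
    _ ≤ C * |t - rr (m+1)| := by
        apply mul_le_mul_of_nonneg_left (bump_lip _ _ _)
        exact le_trans (abs_nonneg _) (hC 0)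
    _ = C * (t - rr (m+1)) := by rw [abs_of_nonneg (by linarith)]

lemma Gfun_bound_right (a : ℕ → ℝ) {C : ℝ} (hC : ∀ i, |a i| ≤ C) {m : ℕ} {t : ℝ}
    (h1 : rr (m+1) ≤ t) (h2 : t ≤ rr m) : |Gfun a t| ≤ C * (rr m - t) := by
  have hb : bump m (rr m) = 0 := bump_zero_right (le_refl _)
  rw [Gfun_eq_bump a h1 h2, abs_mul]
  calc |a (np m)| * |bump m t| ≤ C * |bump m t - bump m (rr m)| := by
        rw [hb, sub_zero]; exact mul_le_mul_of_nonneg_right (hC _) (abs_nonneg _)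
    _ ≤ C * |t - rr m| := by
        apply mul_le_mul_of_nonneg_left (bump_lip _ _ _)
        exact le_trans (abs_nonneg _) (hC 0)
    _ = C * (rr m - t) := by rw [abs_of_nonpos (by linarith)]; ring

lemma Gfun_bound_zero (a : ℕ → ℝ) {C : ℝ} (hC : ∀ i, |a i| ≤ C) {t : ℝ} (ht : 0 < t) :
    |Gfun a t| ≤ C * t := by
  have hC0 : 0 ≤ C := le_trans (abs_nonneg _) (hC 0)
  rcases le_or_gt t (rr 0) with h | h
  · obtain ⟨m, h1, h2⟩ := exists_interval ht h
    calc |Gfun a t| ≤ C * (t - rr (m+1)) := Gfun_bound_left a hC h1 h2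
      _ ≤ C * t := by have := rr_pos (m+1); nlinarith
  · rw [Gfun_zero_out a (Or.inr h.le), abs_zero]; positivity

/-- same-interval Lipschitz bound -/
lemma Gfun_lip_same (a : ℕ → ℝ) {C : ℝ} (hC : ∀ i, |a i| ≤ C) {m : ℕ} {x y : ℝ}
    (hx1 : rr (m+1) ≤ x) (hx2 : x ≤ rr m) (hy1 : rr (m+1) ≤ y) (hy2 : y ≤ rr m) :
    |Gfun a x - Gfun a y| ≤ C * |x - y| := by
  rw [Gfun_eq_bump a hx1 hx2, Gfun_eq_bump a hy1 hy2, ← mul_sub, abs_mul]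
  calc |a (np m)| * |bump m x - bump m y| ≤ C * |x - y| :=
    mul_le_mul (hC _) (bump_lip _ _ _) (abs_nonneg _) (le_trans (abs_nonneg _) (hC 0))

/-- the global Lipschitz estimate -/
lemma Gfun_lip (a : ℕ → ℝ) {C : ℝ} (hC : ∀ i, |a i| ≤ C) (x y : ℝ) :
    |Gfun a x - Gfun a y| ≤ C * |x - y| := by
  have hC0 : 0 ≤ C := le_trans (abs_nonneg _) (hC 0)
  -- wlog x ≤ y
  wlog hxy : x ≤ y generalizing x y
  · rw [abs_sub_comm, abs_sub_comm x y]; exact this y x (le_of_not_ge hxy)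
  rcases eq_or_lt_of_le hxy with rfl | hxy
  · simp [hC0]
  rw [abs_of_neg (by linarith : x - y < 0)]
  rcases le_or_gt y 0 with hy | hy
  · rw [Gfun_zero_out a (Or.inl (by linarith)), Gfun_zero_out a (Or.inl hy), sub_self,
      abs_zero]
    nlinarith
  rcases le_or_gt x 0 with hx | hx
  · rw [Gfun_zero_out a (Or.inl hx), zero_sub, abs_neg]
    calc |Gfun a y| ≤ C * y := Gfun_bound_zero a hC hy
      _ ≤ C * -(x - y) := by nlinarith
  -- both positive
  rcases le_or_gt (rr 0) x with hx0 | hx0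
  · rw [Gfun_zero_out a (Or.inr hx0), Gfun_zero_out a (Or.inr (by linarith)), sub_self,
      abs_zero]
    nlinarith
  obtain ⟨mx, hxm1, hxm2⟩ := exists_interval hx hx0.le
  rcases le_or_gt (rr 0) y with hy0 | hy0
  · rw [Gfun_zero_out a (Or.inr hy0), sub_zero]
    calc |Gfun a x| ≤ C * (rr mx - x) := Gfun_bound_right a hC hxm1 hxm2
      _ ≤ C * -(x - y) := by
          have : rr mx ≤ rr 0 := rr_antitone (Nat.zero_le _)
          nlinarith
  obtain ⟨my, hym1, hym2⟩ := exists_interval hy hy0.le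
  rcases Nat.lt_trichotomy mx my with hlt | rfl | hgt
  · -- y ≤ rr my ≤ rr (mx+1) ≤ x contradiction with x < y
    have h3 : rr my ≤ rr (mx+1) := rr_antitone (by omega)
    linarith
  · exact (Gfun_lip_same a hC hxm1 hxm2 hym1 hym2).trans
      (by rw [abs_of_neg (by linarith : x - y < 0)])
  · -- my < mx : x in a lower interval
    have h3 : rr mx ≤ rr (my+1) := rr_antitone (by omega)
    calc |Gfun a x - Gfun a y| ≤ |Gfun a x| + |Gfun a y| := abs_sub _ _
      _ ≤ C * (rr mx - x) + C * (y - rr (my+1)) :=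
          add_le_add (Gfun_bound_right a hC hxm1 hxm2) (Gfun_bound_left a hC hym1 hym2)
      _ ≤ C * -(x - y) := by nlinarith


lemma pow_half_le_inv (m : ℕ) : (2:ℝ)⁻¹ ^ m ≤ 1/(m+1 : ℝ) := by
  rw [inv_pow]
  rw [one_div]
  apply inv_anti₀ (by positivity)
  exact_mod_cast (Nat.lt_two_pow_self (n := m))

lemma tau_lt_one (m : ℕ) : (2:ℝ)⁻¹ ^ (m+1) < 1 :=
  pow_lt_one₀ (by norm_num) (by norm_num) (by omega)

lemma tau_pos (m : ℕ) : (0:ℝ) < 2⁻¹ ^ (m+1) := by positivity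

lemma ll_le_bump (m : ℕ) : ll m ≤ 4 * ((2:ℝ)⁻¹ ^ (m+1))^2 * ww m := by
  set τ := (2:ℝ)⁻¹ ^ (m+1) with hτ
  have hll : ll m = rr m * τ^2 := by
    rw [ll, rr, hτ, ← pow_mul, ← pow_add]
    ring_nf
  have hτle : τ ≤ 1/2 := by
    calc τ ≤ (2:ℝ)⁻¹^1 := pow_le_pow_of_le_one (by norm_num) (by norm_num) (by omega)
      _ = 1/2 := by norm_num
  have hτ0 : 0 < τ := tau_pos m
  have hR : 0 < rr m := rr_pos m
  have hww : ww m = rr m - rr m * τ^2 := by rw [ww, hll]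
  have hx : 0 < rr m * τ^2 := mul_pos hR (pow_pos hτ0 2)
  have h14 : τ^2 ≤ 1/4 := by nlinarith
  nlinarith [mul_le_mul_of_nonneg_left h14 hx.le]


/-- main lower-bound witness: quotients from zero come arbitrarily close to any `|a i₀|`. -/
lemma exists_big_quot (a : ℕ → ℝ) {w δ : ℝ} (i₀ : ℕ) (hw : 0 ≤ w) (hA : w < |a i₀|)
    (hδ : 0 < δ) : ∃ t : ℝ, 0 < t ∧ t < δ ∧ w < |Gfun a t| / t := by
  set A := |a i₀| with hAdef
  have hA0 : 0 < A := lt_of_le_of_lt hw hA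
  obtain ⟨K₁, hK₁⟩ := exists_nat_one_div_lt hδ
  obtain ⟨K₂, hK₂⟩ := exists_nat_one_div_lt (show (0:ℝ) < (A - w)/(5*A) from div_pos (by linarith) (by positivity))
  set K := max K₁ K₂ with hK
  set m := Nat.pair i₀ K with hm
  have hmK : K ≤ m := Nat.right_le_pair i₀ K
  have hnp : np m = i₀ := by rw [np, hm, Nat.unpair_pair]
  set τ := (2:ℝ)⁻¹ ^ (m+1) with hτ
  have hτ0 : 0 < τ := tau_pos m
  have hτ1 : τ < 1 := tau_lt_one m
  set t := ll m + τ * ww m with ht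
  have hll0 := ll_pos m
  have hww0 := ww_pos m
  have ht0 : 0 < t := by positivity
  have htlt : ll m < t := by nlinarith
  have htrr : t < rr m := by
    have : τ * ww m < ww m := by nlinarith
    rw [ht]; rw [ww] at this ⊢; linarith
  -- t < δ
  have hmono : ∀ j k : ℕ, j ≤ k → 1/((k:ℝ)+1) ≤ 1/((j:ℝ)+1) := by
    intro j k hjk
    apply one_div_le_one_div_of_le (by positivity)
    push_cast; exact_mod_cast (by exact_mod_cast Nat.succ_le_succ hjk : ((j:ℝ)+1) ≤ (k:ℝ)+1)
  have htδ : t < δ := by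
    have h1 : t < 1/((m:ℝ)+1) := lt_trans htrr (rr_lt_inv m)
    have h2 : 1/((m:ℝ)+1) ≤ 1/((K₁:ℝ)+1) := hmono K₁ m (le_trans (le_max_left _ _) hmK)
    linarith
  -- τ small
  have hτsmall : τ < (A - w)/(5*A) := by
    have h1 : τ ≤ 1/((m+1:ℝ)+1) := by rw [hτ]; exact_mod_cast pow_half_le_inv (m+1)
    have h2 : 1/((m+1:ℝ)+1) ≤ 1/((K₂:ℝ)+1) := by
      have := hmono K₂ (m+1) (by omega)
      push_cast at this ⊢; linarith
    linarith
  refine ⟨t, ht0, htδ, ?_⟩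
  -- compute Gfun a t
  have hG : Gfun a t = a i₀ * bump m t := by
    rw [← hnp]
    exact Gfun_eq_bump a (le_trans (rr_succ_lt_ll m).le htlt.le) htrr.le
  have hbump : bump m t = ww m * (τ - τ^2) := by
    rw [bump]
    have harg : (t - ll m)/ww m = τ := by rw [ht]; field_simp; ring
    rw [harg, bfun_eq hτ0.le hτ1.le]
  have hbpos : 0 < bump m t := by rw [hbump]; nlinarith
  have hGabs : |Gfun a t| = A * bump m t := by
    rw [hG, abs_mul, abs_of_pos hbpos, hAdef]
  rw [hGabs, lt_div_iff₀ ht0]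
  -- key inequality: w * t < A * bump m t
  rw [hbump, ht]
  have hllb := ll_le_bump m
  rw [← hτ] at hllb
  -- w * (ll m + τ * ww m) ≤ w * (4τ² ww + τ ww) = w τ ww (1 + 4τ) < A τ ww (1 - τ)
  have h5A : 5*A*τ < A - w := by
    rw [lt_div_iff₀ (by positivity)] at hτsmall
    linarith
  have hwτ : τ * w ≤ τ * A := mul_le_mul_of_nonneg_left hA.le hτ0.le
  have key : w * (1 + 4*τ) < A * (1 - τ) := by nlinarith
  have h5 : w * (ll m + τ * ww m) ≤ w * (τ * ww m * (1 + 4*τ)) := by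
    apply mul_le_mul_of_nonneg_left _ hw
    nlinarith
  calc w * (ll m + τ * ww m) ≤ w * (1 + 4*τ) * (τ * ww m) := by rw [mul_comm (w*(1+4*τ))]; linarith [h5]
    _ < A * (1 - τ) * (τ * ww m) := by
        apply mul_lt_mul_of_pos_right key (by positivity)
    _ = A * (ww m * (τ - τ^2)) := by ring


lemma L_zero_right {q : ℝ → ℝ} {L δ : ℝ} (hδ : 0 < δ)
    (hq : ∀ h : ℝ, 0 < h → h < δ → q h = 0)
    (hL : Tendsto q (nhdsWithin 0 {(0:ℝ)}ᶜ) (nhds L)) : L = 0 := by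
  have h1 : Tendsto q (nhdsWithin 0 (Ioi 0)) (nhds L) :=
    hL.mono_left (nhdsWithin_mono 0 (fun x hx => ne_of_gt hx))
  have h2 : ∀ᶠ h in nhdsWithin (0:ℝ) (Ioi 0), q h = 0 := by
    filter_upwards [Ioo_mem_nhdsGT_of_mem (by constructor <;> [exact le_refl 0; exact hδ] :
      (0:ℝ) ∈ Ico 0 δ)] with h hh
    exact hq h hh.1 hh.2
  have h3 : Tendsto (fun _ : ℝ => (0:ℝ)) (nhdsWithin (0:ℝ) (Ioi 0)) (nhds L) :=
    Tendsto.congr' h2 h1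
  exact tendsto_nhds_unique h3 tendsto_const_nhds

lemma L_zero_left {q : ℝ → ℝ} {L δ : ℝ} (hδ : 0 < δ)
    (hq : ∀ h : ℝ, -δ < h → h < 0 → q h = 0)
    (hL : Tendsto q (nhdsWithin 0 {(0:ℝ)}ᶜ) (nhds L)) : L = 0 := by
  have h1 : Tendsto q (nhdsWithin 0 (Iio 0)) (nhds L) :=
    hL.mono_left (nhdsWithin_mono 0 (fun x hx => ne_of_lt hx))
  have h2 : ∀ᶠ h in nhdsWithin (0:ℝ) (Iio 0), q h = 0 := by
    filter_upwards [Ioo_mem_nhdsLT_of_mem (by constructor <;> [exact neg_lt_zero.2 hδ; exact le_refl 0] :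
      (0:ℝ) ∈ Ioc (-δ) 0)] with h hh
    exact hq h hh.1 hh.2
  have h3 : Tendsto (fun _ : ℝ => (0:ℝ)) (nhdsWithin (0:ℝ) (Iio 0)) (nhds L) :=
    Tendsto.congr' h2 h1
  exact tendsto_nhds_unique h3 tendsto_const_nhds

/-- wherever the two-sided derivative-like limit of `Gfun a` exists, it is `< C` in modulus. -/
lemma no_big_deriv (a : ℕ → ℝ) {C : ℝ} (hC : ∀ i, |a i| ≤ C) (hC0 : 0 < C) (s L : ℝ)
    (hL : Tendsto (fun h : ℝ => (Gfun a (s + h) - Gfun a s) / h)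
      (nhdsWithin 0 {(0:ℝ)}ᶜ) (nhds L)) : |L| < C := by
  set q : ℝ → ℝ := fun h => (Gfun a (s + h) - Gfun a s) / h with hqdef
  rcases le_or_gt s 0 with hs | hs
  · -- use left side
    have : L = 0 := by
      apply L_zero_left one_pos _ hL
      intro h h1 h2
      rw [hqdef]
      simp only
      rw [Gfun_zero_out a (Or.inl (by linarith)), Gfun_zero_out a (Or.inl hs), sub_self,
        zero_div]
    rw [this, abs_zero]; exact hC0
  rcases le_or_gt (rr 0) s with hs0 | hs0
  · have : L = 0 := by
      apply L_zero_right one_pos _ hL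
      intro h h1 h2
      rw [hqdef]
      simp only
      rw [Gfun_zero_out a (Or.inr (by linarith)), Gfun_zero_out a (Or.inr hs0), sub_self,
        zero_div]
    rw [this, abs_zero]; exact hC0
  obtain ⟨m, hm1, hm2⟩ := exists_interval hs hs0.le
  rcases lt_trichotomy s (ll m) with hsl | hsl | hsl
  · -- gap, right side zero
    have hGs : Gfun a s = 0 := Gfun_zero_gap a hm1 hsl.le
    have : L = 0 := by
      apply L_zero_right (show (0:ℝ) < ll m - s by linarith) _ hL
      intro h h1 h2
      rw [hqdef]; simp only
      rw [Gfun_zero_gap a (by linarith) (by linarith : s + h ≤ ll m), hGs, sub_self, zero_div]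
    rw [this, abs_zero]; exact hC0
  · -- s = ll m, left side zero
    have hGs : Gfun a s = 0 := Gfun_zero_gap a hm1 (le_of_eq hsl)
    have hgap := rr_succ_lt_ll m
    have : L = 0 := by
      apply L_zero_left (show (0:ℝ) < ll m - rr (m+1) by linarith) _ hL
      intro h h1 h2
      rw [hqdef]; simp only
      rw [Gfun_zero_gap a (by linarith : rr (m+1) ≤ s + h) (by linarith : s + h ≤ ll m),
        hGs, sub_self, zero_div]
    rw [this, abs_zero]; exact hC0
  rcases lt_trichotomy s (rr m) with hsr | hsr | hsr
  swap
  · -- s = rr m : m ≥ 1, right side zero on (rr m, ll (m-1))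
    have hm0 : m ≠ 0 := by
      intro h; rw [h] at hsr; exact absurd hsr (ne_of_lt hs0)
    have hmm : m - 1 + 1 = m := by omega
    have hgap : rr m < ll (m-1) := by
      have := rr_succ_lt_ll (m-1); rw [hmm] at this; exact this
    have hGs : Gfun a s = 0 := by
      rw [Gfun_eq_bump a hm1 hm2, bump_zero_right (le_of_eq hsr.symm), mul_zero]
    have : L = 0 := by
      apply L_zero_right (show (0:ℝ) < ll (m-1) - s by linarith) _ hL
      intro h h1 h2
      rw [hqdef]; simp only
      rw [Gfun_zero_gap a (m := m-1) (by rw [hmm]; linarith) (by linarith), hGs, sub_self,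
        zero_div]
    rw [this, abs_zero]; exact hC0
  swap
  · linarith
  -- interior case : ll m < s < rr m
  set τ := (s - ll m) / ww m with hτ
  have hww0 := ww_pos m
  have hτ0 : 0 < τ := div_pos (by linarith) hww0
  have hτ1 : τ < 1 := by
    rw [hτ, div_lt_one hww0, ww]; linarith
  set ε := min (s - ll m) (rr m - s) with hε
  have hε0 : 0 < ε := lt_min (by linarith) (by linarith)
  have hkey : ∀ h : ℝ, |h| < ε → h ≠ 0 →
      q h = a (np m) * (1 - 2*τ - h / ww m) := by
    intro h hh hh0
    have hmem : ll m < s + h ∧ s + h < rr m := by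
      rw [abs_lt] at hh
      have := min_le_left (s - ll m) (rr m - s)
      have := min_le_right (s - ll m) (rr m - s)
      constructor <;> [linarith [hh.1]; linarith [hh.2]]
    have hGsh : Gfun a (s + h) = a (np m) * bump m (s + h) :=
      Gfun_eq_bump a (le_trans (rr_succ_lt_ll m).le hmem.1.le) hmem.2.le
    have hGs : Gfun a s = a (np m) * bump m s :=
      Gfun_eq_bump a (le_trans (rr_succ_lt_ll m).le hsl.le) hsr.le
    have harg1 : (s + h - ll m) / ww m = τ + h / ww m := by rw [hτ]; ring
    have hb1 : bump m (s + h) = ww m * ((τ + h/ww m) - (τ + h/ww m)^2) := by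
      rw [bump, harg1, bfun_eq]
      · rw [← harg1]; exact (div_nonneg (by linarith [hmem.1, ll_pos m]) hww0.le)
      · rw [← harg1, div_le_one hww0, ww]; linarith [hmem.2]
    have hb2 : bump m s = ww m * (τ - τ^2) := by
      rw [bump, ← hτ, bfun_eq hτ0.le hτ1.le]
    rw [hqdef]; simp only
    rw [hGsh, hGs, hb1, hb2]
    field_simp
    ring
  have htend : Tendsto (fun h : ℝ => a (np m) * (1 - 2*τ - h / ww m))
      (nhdsWithin 0 {(0:ℝ)}ᶜ) (nhds (a (np m) * (1 - 2*τ))) := by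
    apply Tendsto.mono_left _ nhdsWithin_le_nhds
    have : Continuous (fun h : ℝ => a (np m) * (1 - 2*τ - h / ww m)) := by
      apply Continuous.mul continuous_const
      apply Continuous.sub continuous_const
      exact continuous_id.div_const _
    have h0 := this.tendsto 0
    simpa using h0
  have hLeq : L = a (np m) * (1 - 2*τ) := by
    apply tendsto_nhds_unique _ htend
    apply Tendsto.congr' _ hL
    have h1 : ∀ᶠ h in nhdsWithin (0:ℝ) {(0:ℝ)}ᶜ, |h| < ε := by
      apply eventually_nhdsWithin_of_eventually_nhds
      have := Metric.ball_mem_nhds (0:ℝ) hε0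
      filter_upwards [this] with h hh
      simpa [Real.dist_eq] using hh
    filter_upwards [h1, self_mem_nhdsWithin] with h hh hh0
    exact hkey h hh hh0
  rw [hLeq, abs_mul]
  have h2τ : |1 - 2*τ| < 1 := by rw [abs_lt]; constructor <;> linarith
  have haC := hC (np m)
  have ha0 := abs_nonneg (1 - 2*τ)
  nlinarith [mul_le_mul_of_nonneg_right haC ha0, mul_lt_mul_of_pos_left h2τ hC0]


lemma Gfun_add (a b : ℕ → ℝ) (t : ℝ) : Gfun (a + b) t = Gfun a t + Gfun b t := by
  rw [Gfun, Gfun, Gfun, Pi.add_apply]; ring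

lemma Gfun_smul (c : ℝ) (a : ℕ → ℝ) (t : ℝ) : Gfun (c • a) t = c * Gfun a t := by
  rw [Gfun, Gfun, Pi.smul_apply, smul_eq_mul]; ring

end LinfAux
end

set_option maxHeartbeats 1000000 in
/-- For every nontrivial real Banach space `X`, the set
`[(PNA(X) ∩ LDirA(X)) \ Der(X)] ∪ {0}` contains an isometric copy of `ℓ∞`. -/
theorem linfty_in_PNA_inter_LDirA_not_Der {X : Type*} [NormedAddCommGroup X]
    [NormedSpace ℝ X] [CompleteSpace X] [Nontrivial X] :
    ∃ T : lp (fun _ : ℕ => ℝ) ⊤ →ₗ[ℝ] (X → ℝ),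
      ∀ a : lp (fun _ : ℕ => ℝ) ⊤,
        MemLip0 (0 : X) (T a) ∧ lipNorm (T a) = ‖a‖ ∧
        (a ≠ 0 → PointwiseAttains (T a) ∧ LocDirAttains (T a) ∧ ¬ DerAttains (T a)) := by
  classical
  obtain ⟨x₀, hx₀⟩ := exists_ne (0 : X)
  obtain ⟨g, hg1, hg2⟩ := exists_dual_vector ℝ x₀ (norm_ne_zero_iff.2 hx₀)
  set e : X := ‖x₀‖⁻¹ • x₀ with he_def
  have hx₀n : ‖x₀‖ ≠ 0 := norm_ne_zero_iff.2 hx₀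
  have he : ‖e‖ = 1 := by
    rw [he_def, norm_smul, norm_inv, norm_norm, inv_mul_cancel₀ hx₀n]
  have he0 : e ≠ 0 := by
    intro h; rw [h, norm_zero] at he; norm_num at he
  have hge : g e = 1 := by
    rw [he_def, map_smul]
    have h2 : g x₀ = ‖x₀‖ := by exact_mod_cast hg2
    rw [smul_eq_mul, h2, inv_mul_cancel₀ hx₀n]
  have hgb : ∀ y : X, |g y| ≤ ‖y‖ := by
    intro y
    have h3 := g.le_opNorm y
    rw [hg1, one_mul] at h3
    simpa [Real.norm_eq_abs] using h3
  refine ⟨{ toFun := fun a x => LinfAux.Gfun (⇑a) (g x),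
            map_add' := by
              intro a b; funext x
              simp only [lp.coeFn_add, LinfAux.Gfun_add, Pi.add_apply]
            map_smul' := by
              intro c a; funext x
              simp only [lp.coeFn_smul, LinfAux.Gfun_smul, RingHom.id_apply,
                Pi.smul_apply, smul_eq_mul] }, ?_⟩
  intro a
  simp only [LinearMap.coe_mk, AddHom.coe_mk]
  set f : X → ℝ := fun x => LinfAux.Gfun (⇑a) (g x) with hf
  have hC : ∀ i, |(⇑a : ℕ → ℝ) i| ≤ ‖a‖ := by
    intro i
    have h4 := lp.norm_apply_le_norm (by norm_num : (⊤ : ℝ≥0∞) ≠ 0) a i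
    rw [Real.norm_eq_abs] at h4
    exact h4
  have hna : (0:ℝ) ≤ ‖a‖ := norm_nonneg a
  have hf0 : f 0 = 0 := by
    rw [hf]; simp only [map_zero]
    rw [LinfAux.Gfun_zero_out _ (Or.inl (le_refl (0:ℝ)))]
  have hfsmul : ∀ t : ℝ, f (t • e) = LinfAux.Gfun (⇑a) t := by
    intro t
    rw [hf]; simp only [map_smul, smul_eq_mul, hge, mul_one]
  have hlip : ∀ x y : X, |f x - f y| ≤ ‖a‖ * ‖x - y‖ := by
    intro x y
    calc |f x - f y| ≤ ‖a‖ * |g x - g y| := LinfAux.Gfun_lip (⇑a) hC (g x) (g y)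
      _ ≤ ‖a‖ * ‖x - y‖ := by
          apply mul_le_mul_of_nonneg_left _ hna
          rw [← map_sub]; exact hgb (x - y)
  have hquot : ∀ w : ℝ, w < ‖a‖ → ∀ δ : ℝ, 0 < δ →
      ∃ t : ℝ, 0 < t ∧ t < δ ∧ w < |LinfAux.Gfun (⇑a) t| / t := by
    intro w hw δ hδ
    rcases lt_or_ge w 0 with hw0 | hw0
    · refine ⟨δ/2, by linarith, by linarith, lt_of_lt_of_le hw0 ?_⟩
      positivity
    · have h1 : w < ⨆ i, ‖(⇑a : ℕ → ℝ) i‖ := by rw [← lp.norm_eq_ciSup]; exact hw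
      obtain ⟨i₀, hi₀⟩ := exists_lt_of_lt_ciSup h1
      exact LinfAux.exists_big_quot (⇑a) i₀ hw0 (by simpa [Real.norm_eq_abs] using hi₀) hδ
  have hlipnorm : lipNorm f = ‖a‖ := by
    apply csSup_eq_of_forall_le_of_forall_lt_exists_gt
    · exact ⟨|f e - f 0| / dist e 0, e, 0, he0, rfl⟩
    · rintro r ⟨p, q, hpq, rfl⟩
      rw [div_le_iff₀ (dist_pos.2 hpq), dist_eq_norm]
      exact hlip p q
    · intro w hw
      obtain ⟨t, ht0, ht1, ht2⟩ := hquot w hw 1 one_pos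
      refine ⟨|f (t • e) - f 0| / dist (t • e) 0, ⟨t • e, 0, ?_, rfl⟩, ?_⟩
      · exact smul_ne_zero (ne_of_gt ht0) he0
      · rw [hfsmul, hf0, sub_zero, dist_zero_right, norm_smul, he, mul_one,
          Real.norm_eq_abs, abs_of_pos ht0]
        exact ht2
  refine ⟨⟨hf0, ⟨‖a‖₊, ?_⟩⟩, hlipnorm, ?_⟩
  · apply LipschitzWith.of_dist_le_mul
    intro x y
    rw [Real.dist_eq, dist_eq_norm, coe_nnnorm]
    exact hlip x y
  intro ha
  have hapos : (0:ℝ) < ‖a‖ := norm_pos_iff.2 ha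
  refine ⟨?_, ?_, ?_⟩
  · -- PointwiseAttains
    refine ⟨0, ?_⟩
    rw [hlipnorm]
    apply csSup_eq_of_forall_le_of_forall_lt_exists_gt
    · exact ⟨|f 0 - f e| / dist 0 e, e, he0, rfl⟩
    · rintro r ⟨q, hq, rfl⟩
      rw [div_le_iff₀ (dist_pos.2 (Ne.symm hq)), dist_eq_norm]
      exact hlip 0 q
    · intro w hw
      obtain ⟨t, ht0, ht1, ht2⟩ := hquot w hw 1 one_pos
      refine ⟨|f 0 - f (t • e)| / dist 0 (t • e), ⟨t • e, ?_, rfl⟩, ?_⟩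
      · exact smul_ne_zero (ne_of_gt ht0) he0
      · rw [hfsmul, hf0, zero_sub, abs_neg, dist_zero_left, norm_smul, he, mul_one,
          Real.norm_eq_abs, abs_of_pos ht0]
        exact ht2
  · -- LocDirAttains
    have hch : ∀ k : ℕ, ∃ t : ℝ, 0 < t ∧ t < 1/((k:ℝ)+1) ∧
        ‖a‖ - 1/((k:ℝ)+1) < |LinfAux.Gfun (⇑a) t| / t := by
      intro k
      exact hquot _ (sub_lt_self _ (by positivity)) _ (by positivity)
    choose t ht0 ht1 ht2 using hch
    set v : ℕ → ℝ := fun k => LinfAux.Gfun (⇑a) (t k) / t k with hv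
    have hvabs : ∀ k, |v k| = |LinfAux.Gfun (⇑a) (t k)| / t k := by
      intro k; rw [hv]; simp only [abs_div]
      rw [abs_of_pos (ht0 k)]
    have hvle : ∀ k, |v k| ≤ ‖a‖ := by
      intro k
      rw [hvabs k, div_le_iff₀ (ht0 k)]
      exact LinfAux.Gfun_bound_zero (⇑a) hC (ht0 k)
    have hvmem : ∀ k, v k ∈ Set.Icc (-‖a‖) ‖a‖ := fun k => abs_le.1 (hvle k)
    obtain ⟨z, hzmem, φ, hφ, hvz⟩ :=
      tendsto_subseq_of_bounded (Metric.isBounded_Icc (-‖a‖) ‖a‖) hvmem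
    have hinv : Filter.Tendsto (fun k : ℕ => 1/((k:ℝ)+1)) Filter.atTop (nhds 0) :=
      tendsto_one_div_add_atTop_nhds_zero_nat
    have hmono : ∀ k : ℕ, 1/((φ k : ℝ)+1) ≤ 1/((k:ℝ)+1) := by
      intro k
      apply one_div_le_one_div_of_le (by positivity)
      have h5 := hφ.le_apply (x := k)
      have : ((k:ℝ)) ≤ ((φ k : ℕ) : ℝ) := Nat.cast_le.2 h5
      linarith
    have habsz : |z| = ‖a‖ := by
      have h1 : Filter.Tendsto (fun k => |v (φ k)|) Filter.atTop (nhds |z|) := by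
        have := hvz.abs
        apply this.congr
        intro k; rfl
      have h2 : Filter.Tendsto (fun k => |v (φ k)|) Filter.atTop (nhds ‖a‖) := by
        apply tendsto_of_tendsto_of_tendsto_of_le_of_le
          (g := fun k : ℕ => ‖a‖ - 1/((k:ℝ)+1)) (h := fun _ : ℕ => ‖a‖)
        · have h12 : Filter.Tendsto (fun k : ℕ => ‖a‖ - 1/((k:ℝ)+1)) Filter.atTop
              (nhds (‖a‖ - 0)) := Filter.Tendsto.sub tendsto_const_nhds hinv
          rw [sub_zero] at h12
          exact h12
        · exact tendsto_const_nhds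
        · intro k
          have h6 := ht2 (φ k)
          rw [← hvabs (φ k)] at h6
          have h7 := hmono k
          linarith
        · exact fun k => hvle (φ k)
      exact tendsto_nhds_unique h1 h2
    refine ⟨0, -e, z, by rw [norm_neg, he], by rw [habsz, hlipnorm],
      (fun _ => 0), (fun k => t (φ k) • e), ?_, ?_, ?_, tendsto_const_nhds, ?_⟩
    · intro k
      exact (smul_ne_zero (ne_of_gt (ht0 (φ k))) he0).symm
    · apply Filter.Tendsto.congr _ hvz
      intro k
      simp only [Function.comp_apply]
      rw [hfsmul, hf0, sub_zero, sub_zero, norm_smul, he, mul_one, Real.norm_eq_abs,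
        abs_of_pos (ht0 (φ k))]
    · apply Filter.Tendsto.congr (f₁ := fun _ : ℕ => -e) _ tendsto_const_nhds
      intro k
      rw [zero_sub, norm_neg, norm_smul, he, mul_one, Real.norm_eq_abs,
        abs_of_pos (ht0 (φ k)), smul_neg, smul_smul,
        inv_mul_cancel₀ (ne_of_gt (ht0 (φ k))), one_smul]
    · rw [tendsto_zero_iff_norm_tendsto_zero]
      apply squeeze_zero (fun k => norm_nonneg _)
        (g := fun k : ℕ => 1/((k:ℝ)+1))
      · intro k
        rw [norm_smul, he, mul_one, Real.norm_eq_abs, abs_of_pos (ht0 (φ k))]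
        exact le_trans (ht1 (φ k)).le (hmono k)
      · exact hinv
  · -- not DerAttains
    rintro ⟨x, e', he', L, hT, habs⟩
    rw [hlipnorm] at habs
    set s : ℝ := g x with hs
    set c : ℝ := g e' with hc
    have hc1 : |c| ≤ 1 := by rw [hc]; calc |g e'| ≤ ‖e'‖ := hgb e'
                                        _ = 1 := he'
    have hfx : ∀ u : ℝ, f (x + u • e') = LinfAux.Gfun (⇑a) (s + u * c) := by
      intro u
      rw [hf]; simp only [map_add, map_smul, smul_eq_mul]; rfl
    have hT' : Filter.Tendsto (fun u : ℝ => (LinfAux.Gfun (⇑a) (s + u * c)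
        - LinfAux.Gfun (⇑a) s) / u) (nhdsWithin 0 {(0:ℝ)}ᶜ) (nhds L) := by
      apply Filter.Tendsto.congr _ hT
      intro u
      rw [hfx u]
    by_cases hc0 : c = 0
    · have hzero : ∀ u : ℝ, (LinfAux.Gfun (⇑a) (s + u * c) - LinfAux.Gfun (⇑a) s) / u = 0 := by
        intro u; rw [hc0, mul_zero, add_zero, sub_self, zero_div]
      have hL0 : L = 0 := by
        have h8 : Filter.Tendsto (fun _ : ℝ => (0:ℝ)) (nhdsWithin 0 {(0:ℝ)}ᶜ) (nhds L) := by
          apply Filter.Tendsto.congr _ hT'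
          intro u; rw [hzero u]
        exact tendsto_nhds_unique h8 tendsto_const_nhds
      rw [hL0, abs_zero] at habs
      exact absurd habs.symm (ne_of_gt hapos)
    · have h1 : Filter.Tendsto (fun u : ℝ => (LinfAux.Gfun (⇑a) (s + u * c)
          - LinfAux.Gfun (⇑a) s) / (u * c)) (nhdsWithin 0 {(0:ℝ)}ᶜ) (nhds (L / c)) := by
        have h9 := hT'.const_mul c⁻¹
        have h9' : Filter.Tendsto (fun u : ℝ => c⁻¹ * ((LinfAux.Gfun (⇑a) (s + u * c)
            - LinfAux.Gfun (⇑a) s) / u)) (nhdsWithin 0 {(0:ℝ)}ᶜ) (nhds (L / c)) := by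
          rw [div_eq_inv_mul]
          exact h9
        apply Filter.Tendsto.congr _ h9'
        intro u
        rw [eq_comm, ← div_div]
        exact div_eq_inv_mul _ _
      have h2 : Filter.Tendsto (fun u : ℝ => u * c⁻¹) (nhdsWithin 0 {(0:ℝ)}ᶜ)
          (nhdsWithin 0 {(0:ℝ)}ᶜ) := by
        rw [tendsto_nhdsWithin_iff]
        constructor
        · apply Filter.Tendsto.mono_left _ nhdsWithin_le_nhds
          have h10 : Filter.Tendsto (fun u : ℝ => u * c⁻¹) (nhds 0) (nhds (0 * c⁻¹)) :=
            (continuous_id.mul continuous_const).tendsto 0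
          simpa using h10
        · filter_upwards [self_mem_nhdsWithin] with u hu
          simp only [Set.mem_compl_iff, Set.mem_singleton_iff] at hu ⊢
          exact mul_ne_zero hu (inv_ne_zero hc0)
      have h3 : Filter.Tendsto (fun u : ℝ => (LinfAux.Gfun (⇑a) (s + u)
          - LinfAux.Gfun (⇑a) s) / u) (nhdsWithin 0 {(0:ℝ)}ᶜ) (nhds (L / c)) := by
        have h11 := h1.comp h2
        apply Filter.Tendsto.congr _ h11
        intro u
        simp only [Function.comp_apply]
        rw [mul_assoc, inv_mul_cancel₀ hc0, mul_one]
      have h4 : |L / c| < ‖a‖ := LinfAux.no_big_deriv (⇑a) hC hapos s (L/c) h3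
      have h5 : |L| ≤ |L / c| := by
        rw [abs_div]
        rcases eq_or_lt_of_le (abs_nonneg c) with hc2 | hc2
        · exact absurd (abs_eq_zero.1 hc2.symm) hc0
        · rw [le_div_iff₀ hc2]
          nlinarith [abs_nonneg L]
      rw [habs] at h5
      linarith
end
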